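/- A map μ : S_∞ → [0,∞] with μ(∅) = 0 is σ-additive on the semiring S_∞ if and only if for all u ∈ A*, μ(Cone_∞(u)) = μ({u}) + Σ_{a∈A} μ(Cone_∞(ua)). -/

import Mathlib

open MeasureTheory ENNReal

/-- `A^∞ = A* ∪ A^ω`. -/
abbrev WordsInf (A : Type*) := List A ⊕ (ℕ → A)

/-- `u` is a prefix of the (finite or infinite) word `w`. -/
def IsPrefixInf {A : Type*} (u : List A) (w : WordsInf A) : Prop :=
  match w with
  | Sum.inl v => u <+: v
  | Sum.inr v => ∀ i : Fin u.length, v i = u.get i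

/-- The ∞-cone of a finite word `u`. -/
def ConeInf {A : Type*} (u : List A) : Set (WordsInf A) :=
  {w | IsPrefixInf u w}

/-- `S_∞`: the empty set, singletons of finite words, and ∞-cones. -/
def SInf (A : Type*) : Set (Set (WordsInf A)) :=
  {∅} ∪ {s | ∃ u : List A, s = {Sum.inl u}} ∪ {s | ∃ u : List A, s = ConeInf u}

/-- σ-additivity of a set function on a collection `C`. -/
def SigmaAdditiveOn {W : Type*} (C : Set (Set W)) (μ : Set W → ℝ≥0∞) : Prop :=
  ∀ S : ℕ → Set W, (∀ n, S n ∈ C) → (Pairwise fun m n => Disjoint (S m) (S n)) →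
    (⋃ n, S n) ∈ C → μ (⋃ n, S n) = ∑' n, μ (S n)

section Helpers

variable {A : Type*}

lemma mem_cone_inl {u v : List A} : Sum.inl v ∈ ConeInf u ↔ u <+: v := Iff.rfl

lemma mem_cone_inr {u : List A} {x : ℕ → A} :
    Sum.inr x ∈ ConeInf u ↔ ∀ i (h : i < u.length), x i = u.get ⟨i, h⟩ := by
  constructor
  · intro h i hi; exact h ⟨i, hi⟩
  · intro h i; exact h i i.2

lemma prefix_of_agree {u v : List A} {x : ℕ → A}
    (hu : ∀ i (h : i < u.length), x i = u.get ⟨i, h⟩)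
    (hv : ∀ i (h : i < v.length), x i = v.get ⟨i, h⟩)
    (hl : u.length ≤ v.length) : u <+: v := by
  have : u = v.take u.length := by
    apply List.ext_getElem
    · simp [Nat.min_eq_left hl]
    · intro i h1 h2
      have := (hu i h1).symm.trans (hv i (lt_of_lt_of_le h1 hl))
      simpa [List.getElem_take] using this
  rw [this]; exact List.take_prefix _ _

lemma cone_subset {u v : List A} (h : u <+: v) : ConeInf v ⊆ ConeInf u := by
  rintro (w | x) hw
  · exact h.trans hw
  · rw [mem_cone_inr] at hw ⊢
    intro i hi
    have hiv : i < v.length := lt_of_lt_of_le hi h.length_le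
    rw [hw i hiv]
    simp only [List.get_eq_getElem]
    exact (h.getElem hi).symm

lemma cone_disjoint {u v : List A} (h1 : ¬ u <+: v) (h2 : ¬ v <+: u) :
    Disjoint (ConeInf u) (ConeInf v) := by
  rw [Set.disjoint_left]
  rintro (w | x) hu hv
  · exact (List.prefix_or_prefix_of_prefix hu hv).elim h1 h2
  · rw [mem_cone_inr] at hu hv
    rcases le_total u.length v.length with h | h
    · exact h1 (prefix_of_agree hu hv h)
    · exact h2 (prefix_of_agree hv hu h)

lemma cone_sibling_disjoint {u : List A} {a b : A} (hab : a ≠ b) :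
    Disjoint (ConeInf (u ++ [a])) (ConeInf (u ++ [b])) := by
  apply cone_disjoint
  · intro h
    have := h.eq_of_length (by simp)
    simp only [List.append_cancel_left_eq] at this
    exact hab (by simpa using this)
  · intro h
    have := h.eq_of_length (by simp)
    simp only [List.append_cancel_left_eq] at this
    exact hab (by simpa using this.symm)

lemma inl_self_mem_cone {u : List A} : Sum.inl u ∈ ConeInf u := List.prefix_refl u

lemma cone_decomp {u : List A} :
    ConeInf u = {Sum.inl u} ∪ ⋃ a : A, ConeInf (u ++ [a]) := by
  ext w
  constructor
  · rintro hw
    rcases w with v | x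
    · rw [mem_cone_inl] at hw
      obtain ⟨t, rfl⟩ := hw
      rcases t with _ | ⟨a, t⟩
      · simp
      · right
        refine Set.mem_iUnion.mpr ⟨a, ?_⟩
        rw [mem_cone_inl]
        refine ⟨t, by simp⟩
    · right
      rw [mem_cone_inr] at hw
      refine Set.mem_iUnion.mpr ⟨x u.length, ?_⟩
      rw [mem_cone_inr]
      intro i hi
      rcases lt_or_eq_of_le (Nat.lt_succ_iff.mp (by simpa using hi)) with h | h
      · rw [hw i h]; simp [List.getElem_append_left h]
      · subst h
        simp only [List.get_eq_getElem]
        rw [List.getElem_concat_length rfl]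
  · rintro (hw | hw)
    · simp only [Set.mem_singleton_iff] at hw; subst hw; exact inl_self_mem_cone
    · obtain ⟨a, ha⟩ := Set.mem_iUnion.mp hw
      exact cone_subset ⟨[a], rfl⟩ ha

open ENNReal Classical in
lemma coneP_eq_singleton {u : List A} {P : Finset (Set (WordsInf A))}
    (hC : ConeInf u ∈ P)
    (hdisj : ((P : Set (Set (WordsInf A))).Pairwise (Disjoint · ·)))
    (hcover : ⋃₀ (P : Set (Set (WordsInf A))) = ConeInf u)
    (hne : ∀ s ∈ P, s.Nonempty) : P = {ConeInf u} := by
  apply Finset.eq_singleton_iff_unique_mem.mpr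
  refine ⟨hC, ?_⟩
  intro s hs
  by_contra hne'
  have hsub : s ⊆ ConeInf u := by
    rw [← hcover]; exact Set.subset_sUnion_of_mem hs
  obtain ⟨x, hx⟩ := hne s hs
  exact Set.disjoint_left.mp (hdisj hs hC hne') hx (hsub hx)

open ENNReal Classical in
lemma finPartition [Fintype A] [Nonempty A] (μ : Set (WordsInf A) → ℝ≥0∞)
    (hrec : ∀ u : List A,
      μ (ConeInf u) = μ {Sum.inl u} + ∑ a : A, μ (ConeInf (u ++ [a]))) :
    ∀ (b : ℕ) (u : List A) (P : Finset (Set (WordsInf A))),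
      (∀ s ∈ P, ∃ r : List A, (s = {Sum.inl r} ∨ s = ConeInf r) ∧ u <+: r ∧
        r.length ≤ u.length + b) →
      ((P : Set (Set (WordsInf A))).Pairwise (Disjoint · ·)) →
      (⋃₀ (P : Set (Set (WordsInf A))) = ConeInf u) →
      μ (ConeInf u) = ∑ s ∈ P, μ s := by
  intro b
  induction b with
  | zero =>
    intro u P hroots hdisj hcover
    have hsne : ∀ s ∈ P, s.Nonempty := by
      intro s hs
      obtain ⟨r, hsr, _, _⟩ := hroots s hs
      rcases hsr with h | h <;> rw [h]
      · exact ⟨_, rfl⟩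
      · exact ⟨_, inl_self_mem_cone⟩
    have hall : ∀ s ∈ P, s = {Sum.inl u} ∨ s = ConeInf u := by
      intro s hs
      obtain ⟨r, hsr, hur, hlen⟩ := hroots s hs
      have : r = u := (List.IsPrefix.eq_of_length hur
        (le_antisymm hur.length_le (by simpa using hlen))).symm
      subst this
      exact hsr
    by_cases hC : ConeInf u ∈ P
    · rw [coneP_eq_singleton hC hdisj hcover hsne, Finset.sum_singleton]
    · exfalso
      have hsub : ConeInf u ⊆ {Sum.inl u} := by
        rw [← hcover]
        intro x hx
        obtain ⟨s, hs, hxs⟩ := hx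
        rcases hall s hs with h | h
        · rwa [h] at hxs
        · exact absurd (h ▸ hs) hC
      obtain ⟨a⟩ := ‹Nonempty A›
      have h1 : Sum.inl (u ++ [a]) ∈ ConeInf u := mem_cone_inl.mpr ⟨[a], rfl⟩
      have := hsub h1
      simp at this
  | succ b ih =>
    intro u P hroots hdisj hcover
    have hsne : ∀ s ∈ P, s.Nonempty := by
      intro s hs
      obtain ⟨r, hsr, _, _⟩ := hroots s hs
      rcases hsr with h | h <;> rw [h]
      · exact ⟨_, rfl⟩
      · exact ⟨_, inl_self_mem_cone⟩
    by_cases hC : ConeInf u ∈ P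
    · rw [coneP_eq_singleton hC hdisj hcover hsne, Finset.sum_singleton]
    · have hmemu : ({Sum.inl u} : Set (WordsInf A)) ∈ P := by
        have hm : Sum.inl u ∈ ⋃₀ (P : Set (Set (WordsInf A))) := hcover ▸ inl_self_mem_cone
        obtain ⟨s, hs, hxs⟩ := hm
        obtain ⟨r, hsr, hur, _⟩ := hroots s hs
        rcases hsr with h | h
        · rw [h] at hxs
          have : u = r := by simpa using hxs
          subst this
          exact h ▸ hs
        · rw [h] at hxs
          have hru : r <+: u := mem_cone_inl.mp hxs
          have : u = r := hur.eq_of_length (le_antisymm hur.length_le hru.length_le)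
          subst this
          exact absurd (h ▸ hs) hC
      set P' := P.erase {Sum.inl u} with hP'
      have hP'root : ∀ s ∈ P', ∃ a : A, s ⊆ ConeInf (u ++ [a]) := by
        intro s hs
        obtain ⟨r, hsr, hur, hlen⟩ := hroots s (Finset.mem_of_mem_erase hs)
        have hrne : r ≠ u := by
          rintro rfl
          rcases hsr with h | h
          · exact (Finset.ne_of_mem_erase hs) h
          · exact hC (h ▸ Finset.mem_of_mem_erase hs)
        obtain ⟨t, rfl⟩ := hur
        rcases t with _ | ⟨a, t⟩
        · simp at hrne
        · refine ⟨a, ?_⟩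
          have hpre : u ++ [a] <+: u ++ a :: t := ⟨t, by simp⟩
          have hsubc : s ⊆ ConeInf (u ++ a :: t) := by
            rcases hsr with h | h
            · rw [h]; simp [Set.singleton_subset_iff, inl_self_mem_cone]
            · rw [h]
          exact hsubc.trans (cone_subset hpre)
      set Pa := fun a : A => P'.filter (fun s => s ⊆ ConeInf (u ++ [a])) with hPa
      have hPaP : ∀ a : A, ∀ s ∈ Pa a, s ∈ P := by
        intro a s hs
        exact Finset.mem_of_mem_erase (Finset.mem_filter.mp hs).1
      have hbi : P' = Finset.univ.biUnion Pa := by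
        ext s
        simp only [Finset.mem_biUnion, Finset.mem_univ, true_and, hPa, Finset.mem_filter]
        constructor
        · intro hs
          obtain ⟨a, ha⟩ := hP'root s hs
          exact ⟨a, hs, ha⟩
        · rintro ⟨a, hs, _⟩; exact hs
      have hPadisj : Set.PairwiseDisjoint (Finset.univ : Finset A) Pa := by
        intro a _ b' _ hab
        refine Finset.disjoint_left.mpr ?_
        intro s hsa hsb
        simp only [hPa, Finset.mem_filter] at hsa hsb
        obtain ⟨w, hw⟩ := hsne s (Finset.mem_of_mem_erase hsa.1)
        exact Set.disjoint_left.mp (cone_sibling_disjoint hab) (hsa.2 hw) (hsb.2 hw)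
      have hcova : ∀ a : A, ⋃₀ ((Pa a : Set (Set (WordsInf A)))) = ConeInf (u ++ [a]) := by
        intro a
        apply Set.Subset.antisymm
        · intro x hx
          obtain ⟨s, hs, hxs⟩ := hx
          simp only [hPa, Finset.mem_coe, Finset.mem_filter] at hs
          exact hs.2 hxs
        · intro x hx
          have hxu : x ∈ ⋃₀ (P : Set (Set (WordsInf A))) :=
            hcover ▸ (cone_subset ⟨[a], rfl⟩ hx)
          obtain ⟨s, hs, hxs⟩ := hxu
          have hs' : s ∈ P' := by
            rw [hP', Finset.mem_erase]
            refine ⟨?_, hs⟩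
            rintro rfl
            simp only [Set.mem_singleton_iff] at hxs
            subst hxs
            have h1 : (u ++ [a]) <+: u := mem_cone_inl.mp hx
            have := h1.length_le
            simp at this
          obtain ⟨a', ha'⟩ := hP'root s hs'
          have haa : a' = a := by
            by_contra hne
            exact Set.disjoint_left.mp (cone_sibling_disjoint hne) (ha' hxs) hx
          subst haa
          exact ⟨s, by simp [hPa, Finset.mem_filter, hs', ha'], hxs⟩
      have hIH : ∀ a : A, μ (ConeInf (u ++ [a])) = ∑ s ∈ Pa a, μ s := by
        intro a
        apply ih (u ++ [a]) (Pa a)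
        · intro s hs
          have hsP : s ∈ P := hPaP a s hs
          simp only [hPa, Finset.mem_filter] at hs
          obtain ⟨r, hsr, hur, hlen⟩ := hroots s hsP
          refine ⟨r, hsr, ?_, ?_⟩
          · have hin : Sum.inl r ∈ s := by
              rcases hsr with h | h <;> rw [h]
              · exact rfl
              · exact inl_self_mem_cone
            exact mem_cone_inl.mp (hs.2 hin)
          · simpa [Nat.add_comm, Nat.add_assoc, Nat.add_left_comm] using hlen
        · refine Set.Pairwise.mono ?_ hdisj
          intro s hs
          rw [Finset.mem_coe] at hs ⊢
          exact hPaP a s hs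
        · exact hcova a
      calc μ (ConeInf u) = μ {Sum.inl u} + ∑ a : A, μ (ConeInf (u ++ [a])) := hrec u
        _ = μ {Sum.inl u} + ∑ a : A, ∑ s ∈ Pa a, μ s := by
            congr 1; exact Finset.sum_congr rfl (fun a _ => hIH a)
        _ = μ {Sum.inl u} + ∑ s ∈ P', μ s := by
            rw [hbi, Finset.sum_biUnion hPadisj]
        _ = ∑ s ∈ P, μ s := Finset.add_sum_erase P μ hmemu

lemma mem_SInf_iff {s : Set (WordsInf A)} :
    s ∈ SInf A ↔ s = ∅ ∨ (∃ u : List A, s = {Sum.inl u}) ∨ ∃ u : List A, s = ConeInf u := by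
  simp [SInf, Set.mem_union, Set.mem_setOf_eq, Set.mem_singleton_iff, or_assoc]

lemma union_eq_single {W : Type*} (S : ℕ → Set W) (n₀ : ℕ)
    (h : ∀ m, m ≠ n₀ → S m = ∅) : ⋃ n, S n = S n₀ := by
  apply Set.Subset.antisymm
  · apply Set.iUnion_subset
    intro m
    by_cases hm : m = n₀
    · subst hm; exact subset_rfl
    · rw [h m hm]; exact Set.empty_subset _
  · exact Set.subset_iUnion S n₀

open Classical in
noncomputable def extWord [Nonempty A] (v : List A) : ℕ → A :=
  fun i => if h : i < v.length then v.get ⟨i, h⟩ else Classical.arbitrary A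

lemma extWord_mem [Nonempty A] (v : List A) : Sum.inr (extWord v) ∈ ConeInf v := by
  rw [mem_cone_inr]
  intro i hi
  simp [extWord, dif_pos hi]

lemma extWord_agree [Nonempty A] (v : List A) :
    ∀ i (h : i < v.length), extWord v i = v.get ⟨i, h⟩ := by
  intro i hi; simp [extWord, dif_pos hi]

open Classical in
theorem backward [Fintype A] (μ : Set (WordsInf A) → ℝ≥0∞) (h0 : μ ∅ = 0)
    (hrec : ∀ u : List A,
      μ (ConeInf u) = μ {Sum.inl u} + ∑ a : A, μ (ConeInf (u ++ [a]))) :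
    SigmaAdditiveOn (SInf A) μ := by
  intro S hS hdisj hU
  rcases isEmpty_or_nonempty A with hA | hA
  · -- degenerate case: WordsInf A is a subsingleton
    haveI : Subsingleton (WordsInf A) := by
      constructor
      rintro (x | x) (y | y)
      · have hx : x = [] := by cases x with
          | nil => rfl
          | cons a _ => exact (hA.false a).elim
        have hy : y = [] := by cases y with
          | nil => rfl
          | cons a _ => exact (hA.false a).elim
        rw [hx, hy]
      · exact (hA.false (y 0)).elim
      · exact (hA.false (x 0)).elim
      · exact (hA.false (x 0)).elim
    by_cases hex : ∃ n, (S n).Nonempty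
    · obtain ⟨n₀, x, hx⟩ := hex
      have hothers : ∀ m, m ≠ n₀ → S m = ∅ := by
        intro m hm
        rw [Set.eq_empty_iff_forall_notMem]
        intro y hy
        have hxy : y = x := Subsingleton.elim y x
        subst hxy
        exact Set.disjoint_left.mp (hdisj hm) hy hx
      rw [union_eq_single S n₀ hothers,
        tsum_eq_single n₀ (fun m hm => by rw [hothers m hm, h0])]
    · push_neg at hex
      have hall : ∀ n, S n = ∅ := fun n => by
        have := hex n
        simpa [Set.not_nonempty_iff_eq_empty] using this
      have hE : ⋃ n, S n = ∅ := by simp [hall]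
      rw [hE, h0]
      symm
      have : ∀ n : ℕ, μ (S n) = 0 := fun n => by rw [hall n, h0]
      simp [this]
  · rcases mem_SInf_iff.mp hU with hUe | ⟨u, hUu⟩ | ⟨u, hUu⟩
    · -- union empty
      have hall : ∀ n, S n = ∅ :=
        fun n => Set.eq_empty_of_subset_empty (hUe ▸ Set.subset_iUnion S n)
      rw [hUe, h0]
      symm
      have : ∀ n : ℕ, μ (S n) = 0 := fun n => by rw [hall n, h0]
      simp [this]
    · -- union singleton
      have hm : Sum.inl u ∈ ⋃ n, S n := hUu ▸ rfl
      obtain ⟨n₀, hn₀⟩ := Set.mem_iUnion.mp hm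
      have hothers : ∀ m, m ≠ n₀ → S m = ∅ := by
        intro m hmn
        rw [Set.eq_empty_iff_forall_notMem]
        intro y hy
        have hy' : y ∈ ({Sum.inl u} : Set (WordsInf A)) := hUu ▸ Set.mem_iUnion.mpr ⟨m, hy⟩
        rw [Set.mem_singleton_iff] at hy'
        subst hy'
        exact Set.disjoint_left.mp (hdisj hmn) hy hn₀
      rw [union_eq_single S n₀ hothers,
        tsum_eq_single n₀ (fun m hm' => by rw [hothers m hm', h0])]
    · -- union is a cone : main case
      have htri : ∀ n, S n = ∅ ∨ (∃ w, S n = {Sum.inl w}) ∨ ∃ v, S n = ConeInf v :=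
        fun n => mem_SInf_iff.mp (hS n)
      have hsubU : ∀ n, S n ⊆ ConeInf u := fun n => hUu ▸ Set.subset_iUnion S n
      letI : TopologicalSpace A := ⊥
      haveI : DiscreteTopology A := ⟨rfl⟩
      haveI : CompactSpace A := Finite.compactSpace
      set K : Set (ℕ → A) := {x | Sum.inr x ∈ ConeInf u} with hKdef
      have hKclosed : IsClosed K := by
        have hKeq : K = ⋂ i : Fin u.length, (fun x : ℕ → A => x i) ⁻¹' {u.get i} := by
          ext x
          simp only [hKdef, Set.mem_setOf_eq, Set.mem_iInter, Set.mem_preimage,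
            Set.mem_singleton_iff]
          exact ⟨fun h i => h i, fun h i => h i⟩
        rw [hKeq]
        exact isClosed_iInter fun i =>
          IsClosed.preimage (continuous_apply (i : ℕ) : Continuous fun x : ℕ → A => x i)
            isClosed_singleton
      have hK : IsCompact K := hKclosed.isCompact
      set O : ℕ → Set (ℕ → A) := fun n => Sum.inr ⁻¹' S n with hOdef
      have hOopen : ∀ n, IsOpen (O n) := by
        intro n
        rcases htri n with h | ⟨w, hw⟩ | ⟨v, hv⟩
        · have : O n = ∅ := by simp [hOdef, h]
          rw [this]; exact isOpen_empty
        · have : O n = ∅ := by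
            ext x; simp [hOdef, hw]
          rw [this]; exact isOpen_empty
        · have : O n = ⋂ i : Fin v.length, (fun x : ℕ → A => x i) ⁻¹' {v.get i} := by
            ext x
            simp only [hOdef, Set.mem_preimage, hv, Set.mem_iInter, Set.mem_singleton_iff]
            exact ⟨fun h i => h i, fun h i => h i⟩
          rw [this]
          exact isOpen_iInter_of_finite fun i =>
            (continuous_apply (i : ℕ)).isOpen_preimage _ (isOpen_discrete _)
      have hcovK : K ⊆ ⋃ n, O n := by
        intro x hx
        have : Sum.inr x ∈ ⋃ n, S n := hUu ▸ hx
        obtain ⟨n, hn⟩ := Set.mem_iUnion.mp this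
        exact Set.mem_iUnion.mpr ⟨n, hn⟩
      obtain ⟨t, ht⟩ := hK.elim_finite_subcover O hOopen hcovK
      have hconeidx : ∀ n v, S n = ConeInf v → n ∈ t := by
        intro n v hv
        have huv : u <+: v :=
          mem_cone_inl.mp (hsubU n (hv ▸ inl_self_mem_cone))
        have hxS : Sum.inr (extWord v) ∈ S n := hv ▸ extWord_mem v
        have hxK : extWord v ∈ K := cone_subset huv (extWord_mem v)
        have := ht hxK
        rw [Set.mem_iUnion₂] at this
        obtain ⟨m, hmt, hm⟩ := this
        have hmn : m = n := by
          by_contra hne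
          exact Set.disjoint_left.mp (hdisj hne) hm hxS
        exact hmn ▸ hmt
      set g : ℕ → ℕ := fun n =>
        if h : ∃ v : List A, S n = ConeInf v then (Classical.choose h).length else 0 with hg
      set D : ℕ := t.sup g with hD
      have hsingbound : ∀ n w, S n = {Sum.inl w} → w.length ≤ D := by
        intro n w hw
        have huw : u <+: w := mem_cone_inl.mp (hsubU n (hw ▸ rfl))
        have hxK : extWord w ∈ K := cone_subset huw (extWord_mem w)
        have hxU : Sum.inr (extWord w) ∈ ⋃ n', S n' := hUu ▸ hxK
        obtain ⟨m, hm⟩ := Set.mem_iUnion.mp hxU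
        rcases htri m with h | ⟨w', hw'⟩ | hconem
        · rw [h] at hm; exact absurd hm (Set.notMem_empty _)
        · rw [hw'] at hm; simp at hm
        · have hmt : m ∈ t := hconeidx m _ hconem.choose_spec
          have hgm : g m = (Classical.choose hconem).length := by
            rw [hg]; exact dif_pos hconem
          set v := Classical.choose hconem with hvdef
          have hv : S m = ConeInf v := hconem.choose_spec
          have hvD : v.length ≤ D :=
            le_trans (le_of_eq hgm.symm) (Finset.le_sup hmt)
          by_contra hlen
          push_neg at hlen
          have hvx : ∀ i (h : i < v.length), extWord w i = v.get ⟨i, h⟩ :=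
            mem_cone_inr.mp (hv ▸ hm)
          have hvw : v <+: w :=
            prefix_of_agree hvx (extWord_agree w) (le_of_lt (lt_of_le_of_lt hvD hlen))
          have hmn : m ≠ n := by
            rintro rfl
            rw [hw] at hm
            simp at hm
          have hin : Sum.inl w ∈ S m := hv ▸ mem_cone_inl.mpr hvw
          exact Set.disjoint_left.mp (hdisj hmn) hin (hw ▸ rfl)
      -- finiteness of the support
      set singIdx : Set ℕ := {n | ∃ w : List A, S n = {Sum.inl w}} with hsing
      set f : ℕ → List A := fun n =>
        if h : ∃ w : List A, S n = {Sum.inl w} then Classical.choose h else [] with hf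
      have hfspec : ∀ n ∈ singIdx, S n = {Sum.inl (f n)} := by
        intro n hn
        have hn' : ∃ w : List A, S n = {Sum.inl w} := hn
        have : f n = Classical.choose hn' := by rw [hf]; exact dif_pos hn'
        rw [this]
        exact hn'.choose_spec
      have hsingfin : singIdx.Finite := by
        apply Set.Finite.of_finite_image (f := f)
        · apply Set.Finite.subset (List.finite_length_le A D)
          rintro l ⟨n, hn, rfl⟩
          exact hsingbound n (f n) (hfspec n hn)
        · intro n hn m hm hnm
          by_contra hne
          have h1 : S n = S m := by rw [hfspec n hn, hfspec m hm, hnm]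
          have : Sum.inl (f n) ∈ S n := (hfspec n hn) ▸ rfl
          exact Set.disjoint_left.mp (hdisj hne) this (h1 ▸ this)
      have hFfin : {n | (S n).Nonempty}.Finite := by
        apply Set.Finite.subset (Set.Finite.union (t.finite_toSet) hsingfin)
        intro n hn
        rcases htri n with h | ⟨w, hw⟩ | ⟨v, hv⟩
        · exact absurd (Set.nonempty_iff_ne_empty.mp hn) (by simp [h])
        · exact Or.inr ⟨w, hw⟩
        · exact Or.inl (hconeidx n v hv)
      set F' : Finset ℕ := hFfin.toFinset with hF'
      have hmemF' : ∀ n, n ∈ F' ↔ (S n).Nonempty := by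
        intro n; rw [hF', Set.Finite.mem_toFinset]; rfl
      have hzero : ∀ n ∉ F', μ (S n) = 0 := by
        intro n hn
        rw [hmemF'] at hn
        rw [Set.not_nonempty_iff_eq_empty.mp hn, h0]
      have hSinj : ∀ x ∈ F', ∀ y ∈ F', S x = S y → x = y := by
        intro x hx y hy hxy
        by_contra hne
        obtain ⟨z, hz⟩ := (hmemF' x).mp hx
        exact Set.disjoint_left.mp (hdisj hne) hz (hxy ▸ hz)
      set P : Finset (Set (WordsInf A)) := F'.image S with hP
      set g' : ℕ → ℕ := fun n =>
        if h : ∃ r : List A, S n = {Sum.inl r} ∨ S n = ConeInf r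
        then (Classical.choose h).length else 0 with hg'
      set b : ℕ := F'.sup g' with hb
      have hroots : ∀ s ∈ P, ∃ r : List A, (s = {Sum.inl r} ∨ s = ConeInf r) ∧ u <+: r ∧
          r.length ≤ u.length + b := by
        intro s hs
        rw [hP, Finset.mem_image] at hs
        obtain ⟨n, hn, rfl⟩ := hs
        have hne : (S n).Nonempty := (hmemF' n).mp hn
        have hex : ∃ r : List A, S n = {Sum.inl r} ∨ S n = ConeInf r := by
          rcases htri n with h | ⟨w, hw⟩ | ⟨v, hv⟩
          · exact absurd (Set.nonempty_iff_ne_empty.mp hne) (by simp [h])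
          · exact ⟨w, Or.inl hw⟩
          · exact ⟨v, Or.inr hv⟩
        have hgn : g' n = (Classical.choose hex).length := by
          rw [hg']; exact dif_pos hex
        obtain ⟨r, hrspec, hrlen⟩ :
            ∃ r : List A, (S n = {Sum.inl r} ∨ S n = ConeInf r) ∧ g' n = r.length :=
          ⟨Classical.choose hex, hex.choose_spec, hgn⟩
        refine ⟨r, hrspec, ?_, ?_⟩
        · have hin : Sum.inl r ∈ S n := by
            rcases hrspec with h | h
            · rw [h]; exact rfl
            · rw [h]; exact inl_self_mem_cone
          exact mem_cone_inl.mp (hsubU n hin)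
        · calc r.length = g' n := hrlen.symm
            _ ≤ b := hb ▸ Finset.le_sup hn
            _ ≤ u.length + b := Nat.le_add_left _ _
      have hPdisj : ((P : Set (Set (WordsInf A))).Pairwise (Disjoint · ·)) := by
        intro s hs s' hs' hne
        rw [Finset.mem_coe, hP, Finset.mem_image] at hs hs'
        obtain ⟨n, hn, rfl⟩ := hs
        obtain ⟨m, hm, rfl⟩ := hs'
        have hnm : n ≠ m := fun h => hne (h ▸ rfl)
        exact hdisj hnm
      have hPcov : ⋃₀ (P : Set (Set (WordsInf A))) = ConeInf u := by
        apply Set.Subset.antisymm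
        · intro x hx
          obtain ⟨s, hs, hxs⟩ := hx
          rw [Finset.mem_coe, hP, Finset.mem_image] at hs
          obtain ⟨n, _, rfl⟩ := hs
          exact hsubU n hxs
        · intro x hx
          have : x ∈ ⋃ n, S n := hUu ▸ hx
          obtain ⟨n, hn⟩ := Set.mem_iUnion.mp this
          refine ⟨S n, ?_, hn⟩
          rw [Finset.mem_coe, hP, Finset.mem_image]
          exact ⟨n, (hmemF' n).mpr ⟨x, hn⟩, rfl⟩
      have hmain : μ (ConeInf u) = ∑ s ∈ P, μ s :=
        finPartition μ hrec b u P hroots hPdisj hPcov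
      rw [hUu, hmain, hP, Finset.sum_image hSinj, tsum_eq_sum hzero]

open Classical in
theorem forward [Fintype A] (μ : Set (WordsInf A) → ℝ≥0∞) (h0 : μ ∅ = 0)
    (hsig : SigmaAdditiveOn (SInf A) μ) (u : List A) :
    μ (ConeInf u) = μ {Sum.inl u} + ∑ a : A, μ (ConeInf (u ++ [a])) := by
  set k := Fintype.card A with hk
  set e : Fin k ≃ A := (Fintype.equivFin A).symm with he
  set S : ℕ → Set (WordsInf A) := fun n =>
    match n with
    | 0 => {Sum.inl u}
    | n + 1 => if h : n < k then ConeInf (u ++ [e ⟨n, h⟩]) else ∅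
    with hSdef
  have hS : ∀ n, S n ∈ SInf A := by
    intro n
    rcases n with _ | n
    · exact mem_SInf_iff.mpr (Or.inr (Or.inl ⟨u, rfl⟩))
    · by_cases h : n < k
      · refine mem_SInf_iff.mpr (Or.inr (Or.inr ⟨u ++ [e ⟨n, h⟩], ?_⟩))
        simp [hSdef, dif_pos h]
      · refine mem_SInf_iff.mpr (Or.inl ?_)
        simp [hSdef, dif_neg h]
  have hsing_cone : ∀ a : A, Disjoint ({Sum.inl u} : Set (WordsInf A)) (ConeInf (u ++ [a])) := by
    intro a
    rw [Set.disjoint_singleton_left]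
    intro hmem
    have := (mem_cone_inl.mp hmem).length_le
    simp at this
  have hdisj : Pairwise fun m n => Disjoint (S m) (S n) := by
    intro m n hmn
    rcases m with _ | m <;> rcases n with _ | n
    · exact absurd rfl hmn
    · by_cases h : n < k
      · simpa [hSdef, dif_pos h] using hsing_cone (e ⟨n, h⟩)
      · simp [hSdef, dif_neg h]
    · by_cases h : m < k
      · simpa [hSdef, dif_pos h] using (hsing_cone (e ⟨m, h⟩)).symm
      · simp [hSdef, dif_neg h]
    · have hmn' : m ≠ n := fun h => hmn (by rw [h])
      by_cases hm : m < k <;> by_cases hn : n < k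
      · have hab : e ⟨m, hm⟩ ≠ e ⟨n, hn⟩ := by
          intro h
          exact hmn' (by simpa using Fin.mk.injEq _ _ _ _ ▸ (e.injective h))
        simpa [hSdef, dif_pos hm, dif_pos hn] using cone_sibling_disjoint hab
      · simp [hSdef, dif_neg hn]
      · simp [hSdef, dif_neg hm]
      · simp [hSdef, dif_neg hm]
  have hunion : ⋃ n, S n = ConeInf u := by
    rw [cone_decomp]
    apply Set.Subset.antisymm
    · apply Set.iUnion_subset
      intro n
      rcases n with _ | n
      · exact Set.subset_union_left
      · by_cases h : n < k
        · refine Set.Subset.trans ?_ Set.subset_union_right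
          simp only [hSdef, dif_pos h]
          exact Set.subset_iUnion (fun a : A => ConeInf (u ++ [a])) (e ⟨n, h⟩)
        · simp [hSdef, dif_neg h]
    · rintro x (hx | hx)
      · exact Set.mem_iUnion.mpr ⟨0, hx⟩
      · obtain ⟨a, ha⟩ := Set.mem_iUnion.mp hx
        refine Set.mem_iUnion.mpr ⟨(e.symm a : ℕ) + 1, ?_⟩
        have h : (e.symm a : ℕ) < k := (e.symm a).2
        simp only [hSdef, dif_pos h]
        have : e ⟨(e.symm a : ℕ), h⟩ = a := by
          have : (⟨(e.symm a : ℕ), h⟩ : Fin k) = e.symm a := by ext; rfl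
          rw [this, Equiv.apply_symm_apply]
        rwa [this]
  have hcone : (⋃ n, S n) ∈ SInf A := by
    rw [hunion]; exact mem_SInf_iff.mpr (Or.inr (Or.inr ⟨u, rfl⟩))
  have hmain := hsig S hS hdisj hcone
  rw [hunion] at hmain
  rw [hmain, tsum_eq_zero_add' ENNReal.summable]
  congr 1
  have htail : ∀ n, n ∉ Finset.range k → μ (S (n + 1)) = 0 := by
    intro n hn
    rw [Finset.mem_range] at hn
    have : S (n + 1) = ∅ := by simp [hSdef, dif_neg hn]
    rw [this, h0]
  rw [tsum_eq_sum htail, Finset.sum_range (fun n => μ (S (n + 1)))]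
  rw [← Equiv.sum_comp e (fun a => μ (ConeInf (u ++ [a])))]
  apply Finset.sum_congr rfl
  intro i _
  have : S ((i : ℕ) + 1) = ConeInf (u ++ [e i]) := by
    simp only [hSdef, dif_pos i.2]
  rw [this]


end Helpers

/-- `μ` with `μ ∅ = 0` is σ-additive on `S_∞` iff
`μ(Cone_∞ u) = μ {u} + Σ_{a ∈ A} μ(Cone_∞ (u ++ [a]))` for all finite words `u`. -/
theorem sInf_sigma_additive_iff (A : Type*) [Fintype A]
    (μ : Set (WordsInf A) → ℝ≥0∞) (h0 : μ ∅ = 0) :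
    SigmaAdditiveOn (SInf A) μ ↔
      ∀ u : List A,
        μ (ConeInf u) = μ {Sum.inl u} + ∑ a : A, μ (ConeInf (u ++ [a])) :=
  ⟨fun h u => forward μ h0 h u, fun h => backward μ h0 h⟩
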